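/- Let f be analytic on a neighborhood of [-1,1] with |⟨f, P_k⟩_{L²([-1,1])}| ≤ c ρ^{-k} for all k ≥ 0, for some ρ > 1 and c > 0, where P_k is the k-th (unnormalized) Legendre polynomial. Then the tail of the normalized Legendre expansion satisfies Σ_{k=n+1}^∞ |⟨f, w_k⟩|² ≤ (2c²/(1−ρ⁻²)²) · n · ρ^{−2n}, where w_{k+1} = √(k+½) P_k; hence ‖P_{W_n^⊥} f‖_{L²([-1,1])} ≤ C √n ρ^{−n} for a constant C depending only on c and ρ. -/

import Mathlib

open Polynomial intervalIntegral

noncomputable section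

/-- The `k`-th (unnormalized) Legendre polynomial, via the Rodrigues formula
`P_k = (1/(2^k k!)) dᵏ/dxᵏ (x² − 1)ᵏ`. -/
def legendre (k : ℕ) : Polynomial ℝ :=
  ((1 : ℝ) / (2 ^ k * k.factorial)) • (derivative^[k] ((X ^ 2 - 1) ^ k))

/-- Let `f` be analytic on a neighborhood of `[-1,1]` with Legendre
coefficients `a_k = ⟨f, P_k⟩_{L²([-1,1])}` satisfying `|a_k| ≤ c ρ^{−k}` for some
`ρ > 1`, `c > 0`. Then for `n ≥ 1` the tail of the normalized Legendre expansion
(`w_{k+1} = √(k+1/2) P_k`) satisfies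
`Σ_{k=n}^∞ (k+1/2) a_k² ≤ (2c²/(1−ρ⁻²)²) n ρ^{−2n}`; hence
`‖P_{𝒲_n^⊥} f‖ ≤ C √n ρ^{−n}` for a constant `C` depending only on `c` and `ρ`. -/
theorem legendre_tail_bound
    (f : ℝ → ℝ) (hf : AnalyticOnNhd ℝ f (Set.Icc (-1 : ℝ) 1))
    (c ρ : ℝ) (hc : 0 < c) (hρ : 1 < ρ)
    (ha : ∀ k : ℕ, |∫ x in (-1 : ℝ)..1, f x * (legendre k).eval x| ≤ c * ρ⁻¹ ^ k) :
    (∀ n : ℕ, 1 ≤ n →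
      (∑' k : ℕ, (((n + k : ℕ) : ℝ) + 1 / 2) *
          (∫ x in (-1 : ℝ)..1, f x * (legendre (n + k)).eval x) ^ 2) ≤
        2 * c ^ 2 / (1 - ρ⁻¹ ^ 2) ^ 2 * n * ρ⁻¹ ^ (2 * n)) ∧
    ∃ C > 0, ∀ n : ℕ, 1 ≤ n →
      Real.sqrt (∑' k : ℕ, (((n + k : ℕ) : ℝ) + 1 / 2) *
          (∫ x in (-1 : ℝ)..1, f x * (legendre (n + k)).eval x) ^ 2) ≤
        C * Real.sqrt n * ρ⁻¹ ^ n := by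
  have hρ0 : (0:ℝ) < ρ := lt_trans one_pos hρ
  set q : ℝ := ρ⁻¹ with hqdef
  have hq0 : 0 < q := inv_pos.mpr hρ0
  have hq1 : q < 1 := inv_lt_one_of_one_lt₀ hρ
  set s : ℝ := q ^ 2 with hsdef
  have hs0 : 0 < s := pow_pos hq0 2
  have hs1 : s < 1 := by nlinarith
  have h1s : (0:ℝ) < 1 - s := by linarith
  set a : ℕ → ℝ := fun k => ∫ x in (-1 : ℝ)..1, f x * (legendre k).eval x with hadef
  have key : ∀ n : ℕ, 1 ≤ n →
      (∑' k : ℕ, (((n + k : ℕ) : ℝ) + 1 / 2) * a (n + k) ^ 2) ≤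
        2 * c ^ 2 / (1 - s) ^ 2 * n * s ^ n := by
    intro n hn
    -- dominating series
    set g : ℕ → ℝ := fun k => c ^ 2 * s ^ n * ((n : ℝ) + 1 / 2) * s ^ k
        + c ^ 2 * s ^ n * ((k : ℝ) * s ^ k) with hgdef
    have hgeo : Summable (fun k : ℕ => s ^ k) :=
      summable_geometric_of_lt_one hs0.le hs1
    have hks : Summable (fun k : ℕ => (k : ℝ) * s ^ k) := by
      have := summable_norm_pow_mul_geometric_of_norm_lt_one 1 (r := s)
        (by rwa [Real.norm_eq_abs, abs_of_pos hs0])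
      refine this.of_norm_bounded (fun k => ?_)
      simp [abs_of_nonneg, hs0.le, mul_nonneg, Nat.cast_nonneg, pow_nonneg, abs_mul,
        abs_of_pos hs0, abs_of_nonneg (pow_nonneg hs0.le k)]
    have hgsum : Summable g := ((hgeo.mul_left _).add (hks.mul_left _))
    have hbound : ∀ k : ℕ, (((n + k : ℕ) : ℝ) + 1 / 2) * a (n + k) ^ 2 ≤ g k := by
      intro k
      have h1 : a (n + k) ^ 2 ≤ c ^ 2 * s ^ (n + k) := by
        have := ha (n + k)
        have h2 : a (n+k) ^ 2 = |a (n+k)| ^ 2 := (sq_abs _).symm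
        have h3 : |a (n+k)| ^ 2 ≤ (c * q ^ (n+k)) ^ 2 :=
          pow_le_pow_left₀ (abs_nonneg _) this 2
        rw [h2]
        calc |a (n+k)| ^ 2 ≤ (c * q ^ (n+k)) ^ 2 := h3
          _ = c ^ 2 * s ^ (n+k) := by
              rw [mul_pow, hsdef, ← pow_mul, ← pow_mul, Nat.mul_comm]
      have hpos : (0:ℝ) ≤ ((n + k : ℕ) : ℝ) + 1 / 2 := by positivity
      calc (((n + k : ℕ) : ℝ) + 1 / 2) * a (n + k) ^ 2
          ≤ (((n + k : ℕ) : ℝ) + 1 / 2) * (c ^ 2 * s ^ (n + k)) :=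
            mul_le_mul_of_nonneg_left h1 hpos
        _ = g k := by
            simp only [hgdef]
            push_cast
            ring
    have hsum : Summable (fun k : ℕ => (((n + k : ℕ) : ℝ) + 1 / 2) * a (n + k) ^ 2) := by
      refine Summable.of_nonneg_of_le (fun k => ?_) hbound hgsum
      positivity
    have htsumg : (∑' k, g k) =
        c ^ 2 * s ^ n * ((n : ℝ) + 1 / 2) * (1 - s)⁻¹
          + c ^ 2 * s ^ n * (s / (1 - s) ^ 2) := by
      rw [hgdef, Summable.tsum_add (hgeo.mul_left _) (hks.mul_left _),
        tsum_mul_left, tsum_mul_left, tsum_geometric_of_lt_one hs0.le hs1,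
        tsum_coe_mul_geometric_of_norm_lt_one
          (by rwa [Real.norm_eq_abs, abs_of_pos hs0])]
    have hn1 : (1:ℝ) ≤ (n:ℝ) := by exact_mod_cast hn
    calc (∑' k : ℕ, (((n + k : ℕ) : ℝ) + 1 / 2) * a (n + k) ^ 2)
        ≤ ∑' k, g k := Summable.tsum_le_tsum hbound hsum hgsum
      _ ≤ 2 * c ^ 2 / (1 - s) ^ 2 * n * s ^ n := by
          rw [htsumg, ← sub_nonneg]
          have expand : 2 * c ^ 2 / (1 - s) ^ 2 * n * s ^ n
              - (c ^ 2 * s ^ n * ((n : ℝ) + 1 / 2) * (1 - s)⁻¹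
                + c ^ 2 * s ^ n * (s / (1 - s) ^ 2))
              = c ^ 2 * s ^ n / (1-s)^2 *
                (2 * n - (((n:ℝ) + 1/2) * (1 - s) + s)) := by
            field_simp
          rw [expand]
          have hnn : (0:ℝ) ≤ 2 * n - (((n:ℝ) + 1/2) * (1 - s) + s) := by nlinarith
          positivity
  have hcast : ∀ n : ℕ, ρ⁻¹ ^ (2 * n) = s ^ n := by
    intro n; rw [hsdef, ← pow_mul]
  constructor
  · intro n hn
    have := key n hn
    rw [hcast n]
    simpa [hadef] using this
  · refine ⟨Real.sqrt (2 * c ^ 2 / (1 - s) ^ 2), Real.sqrt_pos.mpr (by positivity), ?_⟩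
    intro n hn
    have h := key n hn
    have h0 : (0:ℝ) ≤ 2 * c ^ 2 / (1 - s) ^ 2 * n * s ^ n := by positivity
    calc Real.sqrt (∑' k : ℕ, (((n + k : ℕ) : ℝ) + 1 / 2) * a (n + k) ^ 2)
        ≤ Real.sqrt (2 * c ^ 2 / (1 - s) ^ 2 * n * s ^ n) := Real.sqrt_le_sqrt h
      _ = Real.sqrt (2 * c ^ 2 / (1 - s) ^ 2) * Real.sqrt n * ρ⁻¹ ^ n := by
          rw [Real.sqrt_mul (by positivity), Real.sqrt_mul (by positivity),
            hsdef, ← pow_mul, Nat.mul_comm, pow_mul,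
            Real.sqrt_sq (pow_nonneg hq0.le n)]
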